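/- arXiv:2108.10542 — 4 statements merged into one kernel-verified Lean document; each statement's English description precedes it below -/
import Mathlib

section
/- Let N ≥ 1 and p be real numbers with 2p > N + 1, and let r > 0. Let φ : (0,r] → [0,∞) and A : (0,r] → (0,∞) be continuously differentiable, and let m̄, ρ : (0,r] → ℝ be continuous with ρ ≥ 0. Assume that on (0,r]: (i) φ' + φ·(φ + 2m̄)/N ≤ ρ, and (ii) A'/A ≤ φ + m̄. Then on (0,r], (φ^{2p−1}·A)' + ((2p−1−N)/N)·φ^{2p}·A + ((4p−2−N)/N)·m̄·φ^{2p−1}·A ≤ (2p−1)·ρ·φ^{2p−2}·A. -/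
/-- The differential inequality (2.1): if `φ' + φ(φ + 2·mbar)/N ≤ ρ` and
`A'/A ≤ φ + mbar` on `(0,r]`, then
`(φ^{2p−1}A)' + ((2p−1−N)/N)φ^{2p}A + ((4p−2−N)/N)·mbar·φ^{2p−1}A ≤ (2p−1)ρφ^{2p−2}A`. -/
theorem stmt_3 (N p r : ℝ) (hN : 1 ≤ N) (hp : N + 1 < 2 * p) (hr : 0 < r)
    (φ φ' A A' mbar ρ : ℝ → ℝ)
    (hφ : ∀ t ∈ Set.Ioc 0 r, HasDerivAt φ (φ' t) t)
    (hφ'c : ContinuousOn φ' (Set.Ioc 0 r))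
    (hφnn : ∀ t ∈ Set.Ioc 0 r, 0 ≤ φ t)
    (hA : ∀ t ∈ Set.Ioc 0 r, HasDerivAt A (A' t) t)
    (hA'c : ContinuousOn A' (Set.Ioc 0 r))
    (hApos : ∀ t ∈ Set.Ioc 0 r, 0 < A t)
    (hmbarc : ContinuousOn mbar (Set.Ioc 0 r))
    (hρc : ContinuousOn ρ (Set.Ioc 0 r))
    (hρnn : ∀ t ∈ Set.Ioc 0 r, 0 ≤ ρ t)
    (hRic : ∀ t ∈ Set.Ioc 0 r, φ' t + φ t * (φ t + 2 * mbar t) / N ≤ ρ t)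
    (hmean : ∀ t ∈ Set.Ioc 0 r, A' t / A t ≤ φ t + mbar t) :
    ∀ t ∈ Set.Ioc 0 r, ∀ D : ℝ,
      HasDerivAt (fun u => φ u ^ (2 * p - 1) * A u) D t →
      D + (2 * p - 1 - N) / N * (φ t ^ (2 * p) * A t)
        + (4 * p - 2 - N) / N * (mbar t * φ t ^ (2 * p - 1) * A t)
        ≤ (2 * p - 1) * (ρ t * φ t ^ (2 * p - 2) * A t) := by
  intro t ht D hD
  have hNpos : (0 : ℝ) < N := lt_of_lt_of_le one_pos hN
  have ha : 0 ≤ φ t := hφnn t ht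
  have hAt : 0 < A t := hApos t ht
  have h1le : (1 : ℝ) ≤ 2 * p - 1 := by linarith
  have hder : HasDerivAt (fun u => φ u ^ (2 * p - 1) * A u)
      (φ' t * (2 * p - 1) * φ t ^ (2 * p - 1 - 1) * A t + φ t ^ (2 * p - 1) * A' t) t :=
    ((hφ t ht).rpow_const (Or.inr h1le)).mul (hA t ht)
  have hDeq : D = φ' t * (2 * p - 1) * φ t ^ (2 * p - 1 - 1) * A t
      + φ t ^ (2 * p - 1) * A' t := hD.unique hder
  have he : (2 * p - 1 - 1 : ℝ) = 2 * p - 2 := by ring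
  rw [hDeq, he]
  rcases eq_or_lt_of_le ha with h0 | hpos
  · have hz : φ t = 0 := h0.symm
    rw [hz, Real.zero_rpow (by linarith : (2 * p - 2 : ℝ) ≠ 0),
      Real.zero_rpow (by linarith : (2 * p - 1 : ℝ) ≠ 0),
      Real.zero_rpow (by linarith : (2 * p : ℝ) ≠ 0)]
    ring_nf
    linarith [hρnn t ht]
  · have hane : φ t ≠ 0 := ne_of_gt hpos
    have e1 : φ t ^ (2 * p - 1) = φ t ^ (2 * p - 2) * φ t := by
      rw [show (2 * p - 1 : ℝ) = (2 * p - 2) + 1 by ring, Real.rpow_add_one hane]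
    have e2 : φ t ^ (2 * p) = φ t ^ (2 * p - 2) * φ t * φ t := by
      conv_lhs => rw [show (2 * p : ℝ) = (2 * p - 1) + 1 by ring, Real.rpow_add_one hane, e1]
    set E := φ t ^ (2 * p - 2) with hE
    have hEnn : 0 ≤ E := Real.rpow_nonneg ha _
    rw [e1, e2]
    have h1 : φ' t ≤ ρ t - φ t * (φ t + 2 * mbar t) / N := by
      linarith [hRic t ht]
    have h2 : A' t ≤ (φ t + mbar t) * A t := by
      have := hmean t ht
      rw [div_le_iff₀ hAt] at this
      exact this
    have key1 : φ' t * (2 * p - 1) * E * A t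
        ≤ (ρ t - φ t * (φ t + 2 * mbar t) / N) * (2 * p - 1) * E * A t := by
      have hm : 0 ≤ (2 * p - 1) * E * A t := by positivity
      have := mul_le_mul_of_nonneg_right h1 hm
      ring_nf at this ⊢
      linarith
    have key2 : E * φ t * A' t ≤ E * φ t * ((φ t + mbar t) * A t) :=
      mul_le_mul_of_nonneg_left h2 (by positivity)
    have ident : (ρ t - φ t * (φ t + 2 * mbar t) / N) * (2 * p - 1) * E * A t
        + E * φ t * ((φ t + mbar t) * A t)
        + (2 * p - 1 - N) / N * (E * φ t * φ t * A t)
        + (4 * p - 2 - N) / N * (mbar t * (E * φ t) * A t)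
        = (2 * p - 1) * (ρ t * E * A t) := by
      field_simp
      ring
    linarith [key1, key2, ident]
end

section
/- Let q > 1 be a real number and 0 < r ≤ R. Let u, v : (0,R] → (0,∞) be continuously differentiable, φ : (0,R] → [0,∞) continuous, and G : (0,R] → [0,∞) nondecreasing. Assume for all t ∈ (0,R]: (u/v)'(t) ≤ (u(t)/v(t))·φ(t) and φ(t)^q·u(t) ≤ G(t). Then (u(R)/v(R))^{1/q} − (u(r)/v(r))^{1/q} ≤ (G(R)^{1/q}/q)·∫_r^R v(t)^{−1/q} dt. -/
/-- Analytic core of Theorem 3.1 (volume element comparison): if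
`(u/v)' ≤ (u/v)·φ` and `φ^q·u ≤ G` with `G` nondecreasing, then
`(u(R)/v(R))^{1/q} − (u(r)/v(r))^{1/q} ≤ (G(R)^{1/q}/q)·∫_r^R v^{−1/q}`. -/
theorem stmt_11 (q r R : ℝ) (hq : 1 < q) (hr : 0 < r) (hrR : r ≤ R)
    (u u' v v' φ G : ℝ → ℝ)
    (hu : ∀ t ∈ Set.Ioc 0 R, HasDerivAt u (u' t) t)
    (hu'c : ContinuousOn u' (Set.Ioc 0 R))
    (hupos : ∀ t ∈ Set.Ioc 0 R, 0 < u t)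
    (hv : ∀ t ∈ Set.Ioc 0 R, HasDerivAt v (v' t) t)
    (hv'c : ContinuousOn v' (Set.Ioc 0 R))
    (hvpos : ∀ t ∈ Set.Ioc 0 R, 0 < v t)
    (hφc : ContinuousOn φ (Set.Ioc 0 R))
    (hφnn : ∀ t ∈ Set.Ioc 0 R, 0 ≤ φ t)
    (hGnn : ∀ t ∈ Set.Ioc 0 R, 0 ≤ G t)
    (hGmono : MonotoneOn G (Set.Ioc 0 R))
    (hquot : ∀ t ∈ Set.Ioc 0 R,
      (u' t * v t - u t * v' t) / (v t) ^ 2 ≤ u t / v t * φ t)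
    (hφqu : ∀ t ∈ Set.Ioc 0 R, φ t ^ q * u t ≤ G t) :
    (u R / v R) ^ (1 / q) - (u r / v r) ^ (1 / q)
      ≤ G R ^ (1 / q) / q * ∫ t in r..R, v t ^ (-(1 / q)) := by
  have hq0 : (0:ℝ) < q := lt_trans one_pos hq
  have hiq : (0:ℝ) < 1 / q := by positivity
  have hRpos : (0:ℝ) < R := lt_of_lt_of_le hr hrR
  have hRmem : R ∈ Set.Ioc 0 R := ⟨hRpos, le_refl R⟩
  have hGR : 0 ≤ G R := hGnn R hRmem
  have hsub : Set.Icc r R ⊆ Set.Ioc 0 R := fun t ht => ⟨lt_of_lt_of_le hr ht.1, ht.2⟩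
  set F : ℝ → ℝ := fun t => (u t / v t) ^ (1 / q) with hFdef
  set F' : ℝ → ℝ := fun t =>
    (u' t * v t - u t * v' t) / (v t) ^ 2 * (1 / q) * (u t / v t) ^ (1 / q - 1) with hF'def
  have hderiv : ∀ t ∈ Set.Ioc 0 R, HasDerivAt F (F' t) t := by
    intro t ht
    have hvne : v t ≠ 0 := (hvpos t ht).ne'
    have hwne : u t / v t ≠ 0 := by
      exact (div_pos (hupos t ht) (hvpos t ht)).ne'
    have h1 : HasDerivAt (fun s => u s / v s)
        ((u' t * v t - u t * v' t) / (v t) ^ 2) t := (hu t ht).div (hv t ht) hvne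
    exact h1.rpow_const (Or.inl hwne)
  have hucont : ContinuousOn u (Set.Ioc 0 R) :=
    fun t ht => (hu t ht).continuousAt.continuousWithinAt
  have hvcont : ContinuousOn v (Set.Ioc 0 R) :=
    fun t ht => (hv t ht).continuousAt.continuousWithinAt
  have hF'cont : ContinuousOn F' (Set.Ioc 0 R) := by
    apply ContinuousOn.mul
    · apply ContinuousOn.mul
      · apply ContinuousOn.div
        · exact (hu'c.mul hvcont).sub (hucont.mul hv'c)
        · exact hvcont.pow 2
        · intro t ht; exact pow_ne_zero 2 (hvpos t ht).ne'
      · exact continuousOn_const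
    · apply ContinuousOn.rpow_const
      · exact hucont.div hvcont (fun t ht => (hvpos t ht).ne')
      · intro t ht; exact Or.inl (div_pos (hupos t ht) (hvpos t ht)).ne'
  have hintF' : IntervalIntegrable F' MeasureTheory.volume r R := by
    apply ContinuousOn.intervalIntegrable
    rw [Set.uIcc_of_le hrR]
    exact hF'cont.mono hsub
  have hhcont : ContinuousOn (fun t => G R ^ (1 / q) / q * v t ^ (-(1 / q)))
      (Set.Icc r R) := by
    apply ContinuousOn.mul continuousOn_const
    apply ContinuousOn.rpow_const (hvcont.mono hsub)
    intro t ht; exact Or.inl (hvpos t (hsub ht)).ne'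
  have hinth : IntervalIntegrable (fun t => G R ^ (1 / q) / q * v t ^ (-(1 / q)))
      MeasureTheory.volume r R := by
    apply ContinuousOn.intervalIntegrable
    rw [Set.uIcc_of_le hrR]; exact hhcont
  have hFTC : ∫ t in r..R, F' t = F R - F r := by
    apply intervalIntegral.integral_eq_sub_of_hasDerivAt
    · intro t ht
      rw [Set.uIcc_of_le hrR] at ht
      exact hderiv t (hsub ht)
    · exact hintF'
  have hbound : ∀ t ∈ Set.Icc r R, F' t ≤ G R ^ (1 / q) / q * v t ^ (-(1 / q)) := by
    intro t ht
    have ht' := hsub ht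
    have hu0 := hupos t ht'
    have hv0 := hvpos t ht'
    have hφ0 := hφnn t ht'
    have hw0 : 0 < u t / v t := div_pos hu0 hv0
    have step1 : F' t ≤ (u t / v t * φ t) * (1 / q) * (u t / v t) ^ (1 / q - 1) := by
      apply mul_le_mul_of_nonneg_right _ (Real.rpow_nonneg hw0.le _)
      exact mul_le_mul_of_nonneg_right (hquot t ht') hiq.le
    have hwpow : (u t / v t) * (u t / v t) ^ (1 / q - 1) = (u t / v t) ^ (1 / q) := by
      have h := Real.rpow_add hw0 1 (1 / q - 1)
      rw [Real.rpow_one, show (1:ℝ) + (1 / q - 1) = 1 / q by ring] at h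
      exact h.symm
    have step2 : u t / v t * φ t * (1 / q) * (u t / v t) ^ (1 / q - 1)
        = 1 / q * (φ t * (u t / v t) ^ (1 / q)) := by
      rw [← hwpow]; ring
    have hdiv : (u t / v t) ^ (1 / q) = u t ^ (1 / q) * v t ^ (-(1 / q)) := by
      rw [Real.div_rpow hu0.le hv0.le, Real.rpow_neg hv0.le, div_eq_mul_inv]
    have h1 : (φ t ^ q * u t) ^ (1 / q) = φ t * u t ^ (1 / q) := by
      rw [Real.mul_rpow (Real.rpow_nonneg hφ0 q) hu0.le, ← Real.rpow_mul hφ0,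
        mul_one_div_cancel hq0.ne', Real.rpow_one]
    have h2 : (φ t ^ q * u t) ^ (1 / q) ≤ G R ^ (1 / q) :=
      Real.rpow_le_rpow (by positivity)
        (le_trans (hφqu t ht') (hGmono ht' hRmem ht'.2)) hiq.le
    have hkey : φ t * (u t / v t) ^ (1 / q) ≤ G R ^ (1 / q) * v t ^ (-(1 / q)) := by
      rw [hdiv, ← mul_assoc, ← h1]
      exact mul_le_mul_of_nonneg_right h2 (Real.rpow_nonneg hv0.le _)
    calc F' t ≤ u t / v t * φ t * (1 / q) * (u t / v t) ^ (1 / q - 1) := step1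
      _ = 1 / q * (φ t * (u t / v t) ^ (1 / q)) := step2
      _ ≤ 1 / q * (G R ^ (1 / q) * v t ^ (-(1 / q))) :=
          mul_le_mul_of_nonneg_left hkey hiq.le
      _ = G R ^ (1 / q) / q * v t ^ (-(1 / q)) := by ring
  have hint_le : ∫ t in r..R, F' t ≤
      ∫ t in r..R, G R ^ (1 / q) / q * v t ^ (-(1 / q)) :=
    intervalIntegral.integral_mono_on hrR hintF' hinth hbound
  have : F R - F r ≤ G R ^ (1 / q) / q * ∫ t in r..R, v t ^ (-(1 / q)) := by
    rw [← hFTC, ← intervalIntegral.integral_const_mul]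
    exact hint_le
  exact this
end

section
/- Let q > 1 and C₀ ≥ 0 be real numbers, let R > 0, let u, v : [0,R] → (0,∞) be continuous, and let Λ : (0,R] → [0,∞) be nondecreasing. For t ∈ (0,R] set U(t) = ∫₀^t u and V(t) = ∫₀^t v. Assume that for all 0 < t ≤ s ≤ R: u(s)/v(s) − u(t)/v(t) ≤ C₀·Λ(s)·(1/v(t))·∫_t^s u(τ)^{1−1/q} dτ. Then for all 0 < r ≤ R: (U(R)/V(R))^{1/q} − (U(r)/V(r))^{1/q} ≤ (C₀/q)·Λ(R)·∫₀^R v(t)·(t/V(t))^{(q+1)/q} dt. -/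
open Set MeasureTheory intervalIntegral

lemma holder_aux {q t : ℝ} (hq : 1 < q) (ht : 0 < t) {u : ℝ → ℝ}
    (hu : ContinuousOn u (Set.Icc 0 t)) (hupos : ∀ s ∈ Set.Icc 0 t, 0 < u s) :
    (∫ τ in (0:ℝ)..t, u τ ^ (1 - 1/q)) ≤ (∫ τ in (0:ℝ)..t, u τ) ^ (1 - 1/q) * t ^ (1/q) := by
  have hq0 : 0 < q := lt_trans one_pos hq
  set p : ℝ := q / (q - 1) with hp
  have hq1 : 0 < q - 1 := sub_pos.mpr hq
  have hpq : Real.HolderConjugate p q :=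
    ((Real.holderConjugate_iff_eq_conjExponent hq).mpr rfl).symm
  set μ : Measure ℝ := volume.restrict (Ioc 0 t) with hμ
  haveI : IsFiniteMeasure μ := by
    constructor
    rw [hμ, Measure.restrict_apply_univ, Real.volume_Ioc]
    exact ENNReal.ofReal_lt_top
  set f : ℝ → ℝ := fun τ => u τ ^ (1 - 1/q) with hf
  have hfcont : ContinuousOn f (Set.Icc 0 t) :=
    hu.rpow_const (fun x hx => Or.inl (hupos x hx).ne')
  have hfmeas : AEStronglyMeasurable f μ :=
    (hfcont.mono Ioc_subset_Icc_self).aestronglyMeasurable measurableSet_Ioc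
  obtain ⟨C, hC⟩ := isCompact_Icc.exists_bound_of_continuousOn hfcont
  have hfmem : MemLp f (ENNReal.ofReal p) μ :=
    MemLp.of_bound hfmeas C <| by
      refine ae_restrict_of_forall_mem measurableSet_Ioc fun x hx => ?_
      exact hC x (Ioc_subset_Icc_self hx)
  have hgmem : MemLp (fun _ : ℝ => (1:ℝ)) (ENNReal.ofReal q) μ := memLp_const 1
  have hfnn : 0 ≤ᵐ[μ] f := by
    refine ae_restrict_of_forall_mem measurableSet_Ioc fun x hx => ?_
    exact Real.rpow_nonneg (hupos x (Ioc_subset_Icc_self hx)).le _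
  have hgnn : 0 ≤ᵐ[μ] (fun _ : ℝ => (1:ℝ)) := Filter.Eventually.of_forall fun _ => zero_le_one
  have H := MeasureTheory.integral_mul_le_Lp_mul_Lq_of_nonneg hpq hfnn hgnn hfmem hgmem
  simp only [mul_one] at H
  have e1 : ∫ a, f a ∂μ = ∫ τ in (0:ℝ)..t, u τ ^ (1 - 1/q) := by
    rw [intervalIntegral.integral_of_le ht.le]
  have e2 : ∫ a, f a ^ p ∂μ = ∫ τ in (0:ℝ)..t, u τ := by
    rw [intervalIntegral.integral_of_le ht.le]
    refine setIntegral_congr_fun measurableSet_Ioc fun x hx => ?_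
    have hx' : 0 < u x := hupos x (Ioc_subset_Icc_self hx)
    rw [hf]
    dsimp only
    rw [← Real.rpow_mul hx'.le]
    have : (1 - 1/q) * p = 1 := by rw [hp]; field_simp
    rw [this, Real.rpow_one]
  have e3 : ∫ _a, (1:ℝ) ^ q ∂μ = t := by
    simp only [Real.one_rpow]
    simp [hμ, Real.volume_Ioc, ht.le]
  rw [e1, e2, e3] at H
  have e4 : 1 / p = 1 - 1 / q := by rw [hp]; field_simp
  rw [e4] at H
  exact H

/-- Analytic core of Theorem 1.3 (relative volume comparison estimate): if the
area ratios satisfy `u(s)/v(s) − u(t)/v(t) ≤ C₀·Λ(s)·(1/v(t))·∫_t^s u^{1−1/q}`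
for `0 < t ≤ s ≤ R`, then with `U = ∫₀^· u`, `V = ∫₀^· v`,
`(U(R)/V(R))^{1/q} − (U(r)/V(r))^{1/q} ≤ (C₀/q)·Λ(R)·∫₀^R v(t)·(t/V(t))^{(q+1)/q} dt`. -/
theorem stmt_13 (q C₀ R : ℝ) (hq : 1 < q) (hC₀ : 0 ≤ C₀) (hR : 0 < R)
    (u v Λ : ℝ → ℝ)
    (hu : ContinuousOn u (Set.Icc 0 R))
    (hupos : ∀ t ∈ Set.Icc 0 R, 0 < u t)
    (hv : ContinuousOn v (Set.Icc 0 R))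
    (hvpos : ∀ t ∈ Set.Icc 0 R, 0 < v t)
    (hΛnn : ∀ t ∈ Set.Ioc 0 R, 0 ≤ Λ t)
    (hΛmono : MonotoneOn Λ (Set.Ioc 0 R))
    (hratio : ∀ t s : ℝ, 0 < t → t ≤ s → s ≤ R →
      u s / v s - u t / v t
        ≤ C₀ * Λ s * (1 / v t) * ∫ τ in t..s, u τ ^ (1 - 1 / q)) :
    ∀ r : ℝ, 0 < r → r ≤ R →
      ((∫ τ in (0:ℝ)..R, u τ) / ∫ τ in (0:ℝ)..R, v τ) ^ (1 / q)
          - ((∫ τ in (0:ℝ)..r, u τ) / ∫ τ in (0:ℝ)..r, v τ) ^ (1 / q)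
        ≤ C₀ / q * Λ R
          * ∫ t in (0:ℝ)..R, v t * (t / ∫ τ in (0:ℝ)..t, v τ) ^ ((q + 1) / q) := by
  intro r hr hrR
  have hq0 : 0 < q := lt_trans one_pos hq
  set U : ℝ → ℝ := fun t => ∫ τ in (0:ℝ)..t, u τ with hUdef
  set V : ℝ → ℝ := fun t => ∫ τ in (0:ℝ)..t, v τ with hVdef
  -- basic integrability
  have huint : ∀ a b : ℝ, a ∈ Set.Icc 0 R → b ∈ Set.Icc 0 R → IntervalIntegrable u volume a b :=
    fun a b ha hb => (hu.mono (Set.uIcc_subset_Icc ha hb)).intervalIntegrable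
  have hvint : ∀ a b : ℝ, a ∈ Set.Icc 0 R → b ∈ Set.Icc 0 R → IntervalIntegrable v volume a b :=
    fun a b ha hb => (hv.mono (Set.uIcc_subset_Icc ha hb)).intervalIntegrable
  have hmem : ∀ {a : ℝ}, 0 ≤ a → a ≤ R → a ∈ Set.Icc 0 R := fun ha hb => Set.mem_Icc.mpr ⟨ha, hb⟩
  have h0mem : (0:ℝ) ∈ Set.Icc 0 R := hmem le_rfl hR.le
  have hRmem : (R:ℝ) ∈ Set.Icc 0 R := hmem hR.le le_rfl
  -- positivity of U, V
  have hUpos : ∀ t : ℝ, 0 < t → t ≤ R → 0 < U t := by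
    intro t ht htR
    exact intervalIntegral.intervalIntegral_pos_of_pos_on (huint 0 t h0mem (hmem ht.le htR))
      (fun x hx => hupos x (hmem hx.1.le (hx.2.le.trans htR))) ht
  have hVpos : ∀ t : ℝ, 0 < t → t ≤ R → 0 < V t := by
    intro t ht htR
    exact intervalIntegral.intervalIntegral_pos_of_pos_on (hvint 0 t h0mem (hmem ht.le htR))
      (fun x hx => hvpos x (hmem hx.1.le (hx.2.le.trans htR))) ht
  -- continuity of U, V on [0, R]
  have hUcont : ContinuousOn U (Set.Icc 0 R) := by
    have := intervalIntegral.continuousOn_primitive_interval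
      (f := u) (μ := volume) (a := (0:ℝ)) (b := R)
      (by rw [Set.uIcc_of_le hR.le]; exact hu.integrableOn_Icc)
    rwa [Set.uIcc_of_le hR.le] at this
  have hVcont : ContinuousOn V (Set.Icc 0 R) := by
    have := intervalIntegral.continuousOn_primitive_interval
      (f := v) (μ := volume) (a := (0:ℝ)) (b := R)
      (by rw [Set.uIcc_of_le hR.le]; exact hv.integrableOn_Icc)
    rwa [Set.uIcc_of_le hR.le] at this
  -- derivatives of U, V at interior points
  have hIccnhds : ∀ {t : ℝ}, t ∈ Set.Ioo 0 R → Set.Icc (0:ℝ) R ∈ nhds t := by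
    intro t ht
    exact Filter.mem_of_superset (isOpen_Ioo.mem_nhds ht) Set.Ioo_subset_Icc_self
  have hUderiv : ∀ t ∈ Set.Ioo (0:ℝ) R, HasDerivAt U (u t) t := by
    intro t ht
    have hct : ContinuousAt u t := hu.continuousAt (hIccnhds ht)
    exact intervalIntegral.integral_hasDerivAt_right
      (huint 0 t h0mem (hmem ht.1.le ht.2.le))
      ⟨Set.Icc 0 R, hIccnhds ht, (hu.mono le_rfl).aestronglyMeasurable measurableSet_Icc⟩ hct
  have hVderiv : ∀ t ∈ Set.Ioo (0:ℝ) R, HasDerivAt V (v t) t := by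
    intro t ht
    have hct : ContinuousAt v t := hv.continuousAt (hIccnhds ht)
    exact intervalIntegral.integral_hasDerivAt_right
      (hvint 0 t h0mem (hmem ht.1.le ht.2.le))
      ⟨Set.Icc 0 R, hIccnhds ht, (hv.mono le_rfl).aestronglyMeasurable measurableSet_Icc⟩ hct
  -- the area-element exponent
  have he : (0:ℝ) < 1 - 1/q := by
    have : 1/q < 1 := by rw [div_lt_one hq0]; exact hq
    linarith
  have hue_cont : ContinuousOn (fun σ => u σ ^ (1 - 1/q)) (Set.Icc 0 R) :=
    hu.rpow_const (fun x hx => Or.inl (hupos x hx).ne')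
  have hueint : ∀ a b : ℝ, a ∈ Set.Icc 0 R → b ∈ Set.Icc 0 R →
      IntervalIntegrable (fun σ => u σ ^ (1 - 1/q)) volume a b :=
    fun a b ha hb => (hue_cont.mono (Set.uIcc_subset_Icc ha hb)).intervalIntegrable
  -- key differential inequality ingredient
  have key : ∀ t : ℝ, 0 < t → t ≤ R →
      u t * V t - U t * v t
        ≤ C₀ * Λ t * v t * (t ^ ((q+1)/q) * U t ^ (1 - 1/q)) := by
    intro t ht htR
    have htmem : t ∈ Set.Icc 0 R := hmem ht.le htR
    set W : ℝ := ∫ σ in (0:ℝ)..t, u σ ^ (1 - 1/q) with hWdef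
    have hWnn : 0 ≤ W :=
      intervalIntegral.integral_nonneg ht.le fun x hx =>
        Real.rpow_nonneg (hupos x (hmem hx.1 (hx.2.trans htR))).le _
    have hΛt : 0 ≤ Λ t := hΛnn t ⟨ht, htR⟩
    have hvt : 0 < v t := hvpos t htmem
    -- Step A : write the LHS as an integral
    have hA : u t * V t - U t * v t = ∫ τ in (0:ℝ)..t, (u t * v τ - u τ * v t) := by
      rw [intervalIntegral.integral_sub
        ((hvint 0 t h0mem htmem).const_mul (u t))
        ((huint 0 t h0mem htmem).mul_const (v t)),
        intervalIntegral.integral_const_mul, intervalIntegral.integral_mul_const]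
    -- Step B : pointwise bound for a.e. τ
    have hbound : ∀ τ ∈ Set.Icc (0:ℝ) t, τ ≠ 0 →
        u t * v τ - u τ * v t ≤ C₀ * Λ t * v t * W := by
      intro τ hτ hτ0
      have hτpos : 0 < τ := lt_of_le_of_ne hτ.1 (Ne.symm hτ0)
      have hτmem : τ ∈ Set.Icc 0 R := hmem hτ.1 (hτ.2.trans htR)
      have hvτ : 0 < v τ := hvpos τ hτmem
      have h3 := hratio τ t hτpos hτ.2 htR
      have hI : (∫ σ in τ..t, u σ ^ (1 - 1/q)) ≤ W := by
        have hadj := intervalIntegral.integral_add_adjacent_intervals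
          (hueint 0 τ h0mem hτmem) (hueint τ t hτmem htmem)
        have h0τ : 0 ≤ ∫ σ in (0:ℝ)..τ, u σ ^ (1 - 1/q) :=
          intervalIntegral.integral_nonneg hτ.1 fun x hx =>
            Real.rpow_nonneg (hupos x (hmem hx.1 (hx.2.trans (hτ.2.trans htR)))).le _
        rw [hWdef, ← hadj]
        linarith
      have key2 : u t * v τ - u τ * v t = (u t / v t - u τ / v τ) * (v τ * v t) := by
        field_simp
      rw [key2]
      calc (u t / v t - u τ / v τ) * (v τ * v t)
          ≤ (C₀ * Λ t * (1 / v τ) * ∫ σ in τ..t, u σ ^ (1 - 1/q)) * (v τ * v t) :=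
            mul_le_mul_of_nonneg_right h3 (by positivity)
        _ = C₀ * Λ t * v t * ∫ σ in τ..t, u σ ^ (1 - 1/q) := by field_simp
        _ ≤ C₀ * Λ t * v t * W := by
            apply mul_le_mul_of_nonneg_left hI
            positivity
    have hae : (fun τ => u t * v τ - u τ * v t)
        ≤ᵐ[MeasureTheory.volume.restrict (Set.Icc 0 t)] fun _ => C₀ * Λ t * v t * W := by
      have h1 : ∀ᵐ τ ∂(MeasureTheory.volume.restrict (Set.Icc (0:ℝ) t)), τ ∈ Set.Icc (0:ℝ) t :=
        ae_restrict_mem measurableSet_Icc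
      have h2 : ∀ᵐ τ ∂(MeasureTheory.volume.restrict (Set.Icc (0:ℝ) t)), τ ≠ 0 := by
        refine ae_restrict_of_ae ?_
        have : (MeasureTheory.volume : Measure ℝ) {(0:ℝ)} = 0 := measure_singleton 0
        have h2' := (MeasureTheory.measure_eq_zero_iff_ae_notMem).mp this
        filter_upwards [h2'] with x hx
        simpa using hx
      filter_upwards [h1, h2] with τ hτ hτ0
      exact hbound τ hτ hτ0
    have hB : (∫ τ in (0:ℝ)..t, (u t * v τ - u τ * v t)) ≤ t * (C₀ * Λ t * v t * W) := by
      have := intervalIntegral.integral_mono_ae_restrict ht.le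
        (((hvint 0 t h0mem htmem).const_mul (u t)).sub ((huint 0 t h0mem htmem).mul_const (v t)))
        (intervalIntegrable_const) hae
      simp only [intervalIntegral.integral_const, smul_eq_mul, sub_zero] at this
      linarith
    -- Step C : Hölder
    have hC : W ≤ U t ^ (1 - 1/q) * t ^ (1/q) := by
      rw [hWdef, hUdef]
      exact holder_aux hq ht (hu.mono (Set.Icc_subset_Icc_right htR))
        (fun s hs => hupos s (hmem hs.1 (hs.2.trans htR)))
    have hfinal : t * (C₀ * Λ t * v t * W) ≤ C₀ * Λ t * v t * (t ^ ((q+1)/q) * U t ^ (1 - 1/q)) := by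
      have h4 : t * (C₀ * Λ t * v t * W) ≤ t * (C₀ * Λ t * v t * (U t ^ (1 - 1/q) * t ^ (1/q))) := by
        apply mul_le_mul_of_nonneg_left _ ht.le
        apply mul_le_mul_of_nonneg_left hC
        positivity
      have h5 : t ^ ((q+1)/q) = t * t ^ (1/q) := by
        have : (q+1)/q = 1 + 1/q := by field_simp
        rw [this, Real.rpow_add ht, Real.rpow_one]
      rw [h5]
      calc t * (C₀ * Λ t * v t * W)
          ≤ t * (C₀ * Λ t * v t * (U t ^ (1 - 1/q) * t ^ (1/q))) := h4
        _ = C₀ * Λ t * v t * (t * t ^ (1/q) * U t ^ (1 - 1/q)) := by ring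
    rw [hA]
    exact le_trans hB hfinal
  -- setup for the comparison function
  have hΛR : 0 ≤ Λ R := hΛnn R ⟨hR, le_rfl⟩
  have hs₀nn : (0:ℝ) ≤ (q+1)/q := div_nonneg (by linarith) hq0.le
  set g : ℝ → ℝ := fun t => v t * (t / V t) ^ ((q+1)/q) with hgdef
  have hVnn : ∀ t ∈ Set.Icc (0:ℝ) R, 0 ≤ V t := fun t ht =>
    intervalIntegral.integral_nonneg ht.1 (fun x hx => (hvpos x (hmem hx.1 (hx.2.trans ht.2))).le)
  have hgnn : ∀ t ∈ Set.Icc (0:ℝ) R, 0 ≤ g t := by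
    intro t ht
    exact mul_nonneg (hvpos t ht).le (Real.rpow_nonneg (div_nonneg ht.1 (hVnn t ht)) _)
  -- lower bound for V and boundedness of g
  obtain ⟨xm, hxm, hmin⟩ := isCompact_Icc.exists_isMinOn (Set.nonempty_Icc.mpr hR.le) hv
  have hm0 : 0 < v xm := hvpos xm hxm
  have hVlb : ∀ t ∈ Set.Ioc (0:ℝ) R, v xm * t ≤ V t := by
    intro t ht
    have h6 : ∫ τ in (0:ℝ)..t, v xm ≤ ∫ τ in (0:ℝ)..t, v τ :=
      intervalIntegral.integral_mono_on ht.1.le intervalIntegrable_const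
        (hvint 0 t h0mem (hmem ht.1.le ht.2)) (fun x hx => hmin (hmem hx.1 (hx.2.trans ht.2)))
    simp only [intervalIntegral.integral_const, smul_eq_mul, sub_zero] at h6
    calc v xm * t = t * v xm := mul_comm _ _
      _ ≤ V t := h6
  obtain ⟨Mv, hMv⟩ := isCompact_Icc.exists_bound_of_continuousOn hv
  have hgbd : ∀ t ∈ Set.Ioc (0:ℝ) R, ‖g t‖ ≤ Mv * (1 / v xm) ^ ((q+1)/q) := by
    intro t ht
    have htmem : t ∈ Set.Icc 0 R := hmem ht.1.le ht.2
    have hVt : 0 < V t := hVpos t ht.1 ht.2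
    have h1 : t / V t ≤ 1 / v xm := by
      rw [div_le_div_iff₀ hVt hm0]
      calc t * v xm = v xm * t := mul_comm _ _
        _ ≤ V t := hVlb t ht
        _ = 1 * V t := (one_mul _).symm
    have h2 : (t / V t) ^ ((q+1)/q) ≤ (1 / v xm) ^ ((q+1)/q) :=
      Real.rpow_le_rpow (div_nonneg ht.1.le hVt.le) h1 hs₀nn
    rw [Real.norm_of_nonneg (hgnn t htmem)]
    have h5 : v t ≤ Mv := le_trans (le_abs_self _) (hMv t htmem)
    exact mul_le_mul h5 h2 (Real.rpow_nonneg (div_nonneg ht.1.le hVt.le) _)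
      (le_trans (hvpos t htmem).le h5)
  -- continuity and integrability of g
  have hgcontOn : ContinuousOn g (Set.Ioc 0 R) := by
    apply ContinuousOn.mul (hv.mono Set.Ioc_subset_Icc_self)
    apply ContinuousOn.rpow_const
    · exact continuousOn_id.div (hVcont.mono Set.Ioc_subset_Icc_self)
        (fun t ht => (hVpos t ht.1 ht.2).ne')
    · intro t ht; exact Or.inr hs₀nn
  have hgIntOn : MeasureTheory.IntegrableOn g (Set.Ioc 0 R) :=
    ⟨hgcontOn.aestronglyMeasurable measurableSet_Ioc,
      MeasureTheory.HasFiniteIntegral.restrict_of_bounded _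
        (by rw [Real.volume_Ioc]; exact ENNReal.ofReal_lt_top)
        (ae_restrict_of_forall_mem measurableSet_Ioc hgbd)⟩
  have hgint : ∀ a b : ℝ, 0 ≤ a → a ≤ b → b ≤ R → IntervalIntegrable g volume a b := by
    intro a b ha hab hbR
    rw [intervalIntegrable_iff]
    refine hgIntOn.mono_set ?_
    rw [Set.uIoc_of_le hab]
    exact Set.Ioc_subset_Ioc ha hbR
  -- the functions F and G
  set c : ℝ := C₀ / q * Λ R with hcdef
  have hc : 0 ≤ c := mul_nonneg (div_nonneg hC₀ hq0.le) hΛR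
  set F : ℝ → ℝ := fun t => (U t / V t) ^ (1/q) with hFdef
  set G : ℝ → ℝ := fun t => ∫ s in r..t, c * g s with hGdef
  have hIccrR : Set.Icc r R ⊆ Set.Icc 0 R := Set.Icc_subset_Icc_left hr.le
  have hIccrR' : Set.Icc r R ⊆ Set.Ioc 0 R := fun x hx => ⟨lt_of_lt_of_le hr hx.1, hx.2⟩
  -- continuity of F and G on [r, R]
  have hFcont : ContinuousOn F (Set.Icc r R) := by
    apply ContinuousOn.rpow_const
    · exact (hUcont.mono hIccrR).div (hVcont.mono hIccrR)
        (fun t ht => (hVpos t (lt_of_lt_of_le hr ht.1) ht.2).ne')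
    · intro t ht
      exact Or.inl (ne_of_gt (div_pos (hUpos t (lt_of_lt_of_le hr ht.1) ht.2)
        (hVpos t (lt_of_lt_of_le hr ht.1) ht.2)))
  have hGcont : ContinuousOn G (Set.Icc r R) := by
    have h7 := intervalIntegral.continuousOn_primitive_interval
      (f := fun s => c * g s) (μ := volume) (a := r) (b := R)
      (by rw [Set.uIcc_of_le hrR]
          exact ((hgIntOn.mono_set (fun x hx => hIccrR' hx)).const_mul c))
    rwa [Set.uIcc_of_le hrR] at h7
  -- derivatives on (r, R)
  have hGderiv : ∀ t ∈ Set.Ioo r R, HasDerivAt G (c * g t) t := by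
    intro t ht
    have htIoo : t ∈ Set.Ioo 0 R := ⟨lt_trans hr ht.1, ht.2⟩
    have hVct : ContinuousAt V t := (hVderiv t htIoo).continuousAt
    have hgc : ContinuousAt (fun s => c * g s) t := by
      apply ContinuousAt.mul continuousAt_const
      apply ContinuousAt.mul (hv.continuousAt (hIccnhds htIoo))
      apply ContinuousAt.rpow_const
      · exact continuousAt_id.div hVct (hVpos t htIoo.1 htIoo.2.le).ne'
      · exact Or.inr hs₀nn
    refine intervalIntegral.integral_hasDerivAt_right
      ((hgint r t hr.le ht.1.le (ht.2.le.trans le_rfl)).const_mul c) ?_ hgc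
    exact ⟨Set.Ioo 0 R, isOpen_Ioo.mem_nhds htIoo,
      ((continuousOn_const.mul (hgcontOn.mono Set.Ioo_subset_Ioc_self)).aestronglyMeasurable
        measurableSet_Ioo)⟩
  have hFderiv : ∀ t ∈ Set.Ioo r R, HasDerivAt F
      ((u t * V t - U t * v t) / (V t)^2 * (1/q) * (U t / V t) ^ (1/q - 1)) t := by
    intro t ht
    have htIoo : t ∈ Set.Ioo 0 R := ⟨lt_trans hr ht.1, ht.2⟩
    have hVt : 0 < V t := hVpos t htIoo.1 htIoo.2.le
    have hUt : 0 < U t := hUpos t htIoo.1 htIoo.2.le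
    have hdiv := (hUderiv t htIoo).div (hVderiv t htIoo) hVt.ne'
    exact hdiv.rpow_const (Or.inl (ne_of_gt (div_pos hUt hVt)))
  -- the derivative comparison
  have hDbound : ∀ t ∈ Set.Ioo r R,
      (u t * V t - U t * v t) / (V t)^2 * (1/q) * (U t / V t) ^ (1/q - 1) ≤ c * g t := by
    intro t ht
    have ht0 : 0 < t := lt_trans hr ht.1
    have htR : t ≤ R := ht.2.le
    have hVt : 0 < V t := hVpos t ht0 htR
    have hUt : 0 < U t := hUpos t ht0 htR
    have hvt : 0 < v t := hvpos t (hmem ht0.le htR)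
    have hΛt : 0 ≤ Λ t := hΛnn t ⟨ht0, htR⟩
    have hkey := key t ht0 htR
    set d : ℝ := 1/q * (U t / V t) ^ (1/q - 1) / V t ^ 2 with hd
    have hdpos : 0 < d := by
      apply div_pos (mul_pos (by positivity) (Real.rpow_pos_of_pos (div_pos hUt hVt) _))
      positivity
    have hAd : (u t * V t - U t * v t) / (V t)^2 * (1/q) * (U t / V t) ^ (1/q - 1)
        = (u t * V t - U t * v t) * d := by rw [hd]; ring
    rw [hAd]
    have step1 : (u t * V t - U t * v t) * d
        ≤ (C₀ * Λ t * v t * (t ^ ((q+1)/q) * U t ^ (1 - 1/q))) * d :=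
      mul_le_mul_of_nonneg_right hkey hdpos.le
    -- rpow algebra
    have h1 : (U t / V t) ^ (1/q - 1) = U t ^ (1/q - 1) * V t ^ (1 - 1/q) := by
      rw [Real.div_rpow hUt.le hVt.le, div_eq_mul_inv, ← Real.rpow_neg hVt.le, neg_sub]
    have h2 : U t ^ (1 - 1/q) * U t ^ (1/q - 1) = 1 := by
      rw [← Real.rpow_add hUt]
      norm_num
    have h3 : (t / V t) ^ ((q+1)/q) = t ^ ((q+1)/q) * V t ^ (-((q+1)/q)) := by
      rw [Real.div_rpow ht0.le hVt.le, div_eq_mul_inv, ← Real.rpow_neg hVt.le]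
    have h4 : V t ^ (1 - 1/q) = V t ^ (-((q+1)/q)) * V t ^ (2:ℕ) := by
      rw [← Real.rpow_natCast (V t) 2, ← Real.rpow_add hVt]
      congr 1
      push_cast
      field_simp
      ring
    have step2 : (C₀ * Λ t * v t * (t ^ ((q+1)/q) * U t ^ (1 - 1/q))) * d
        = C₀ / q * Λ t * (v t * (t / V t) ^ ((q+1)/q)) := by
      have hV2 : (V t : ℝ) ^ (2:ℕ) ≠ 0 := by positivity
      have hVV : (V t ^ (2:ℕ)) * (V t ^ (2:ℕ))⁻¹ = 1 := mul_inv_cancel₀ hV2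
      rw [hd, h1, h3, h4,
        div_eq_mul_inv (1 / q * (U t ^ (1 / q - 1) * (V t ^ (-((q + 1) / q)) * V t ^ (2:ℕ))))
          (V t ^ (2:ℕ))]
      linear_combination
        (C₀ * Λ t * v t * t ^ ((q+1)/q) * (1/q) * V t ^ (-((q+1)/q)) * V t ^ (2:ℕ)
          * (V t ^ (2:ℕ))⁻¹) * h2
        + (C₀ * Λ t * v t * t ^ ((q+1)/q) * (1/q) * V t ^ (-((q+1)/q))) * hVV
    have step3 : C₀ / q * Λ t * (v t * (t / V t) ^ ((q+1)/q)) ≤ c * g t := by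
      rw [hcdef, hgdef]
      have hX : 0 ≤ v t * (t / V t) ^ ((q+1)/q) :=
        mul_nonneg hvt.le (Real.rpow_nonneg (div_nonneg ht0.le hVt.le) _)
      exact mul_le_mul_of_nonneg_right
        (mul_le_mul_of_nonneg_left (hΛmono ⟨ht0, htR⟩ ⟨hR, le_rfl⟩ htR)
          (div_nonneg hC₀ hq0.le)) hX
    calc (u t * V t - U t * v t) * d
        ≤ (C₀ * Λ t * v t * (t ^ ((q+1)/q) * U t ^ (1 - 1/q))) * d := step1
      _ = C₀ / q * Λ t * (v t * (t / V t) ^ ((q+1)/q)) := step2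
      _ ≤ c * g t := step3
  -- monotonicity of G - F
  have hmono : MonotoneOn (fun t => G t - F t) (Set.Icc r R) := by
    apply monotoneOn_of_deriv_nonneg (convex_Icc r R) (hGcont.sub hFcont)
    · intro t ht
      rw [interior_Icc] at ht
      exact (((hGderiv t ht).sub (hFderiv t ht)).differentiableAt).differentiableWithinAt
    · intro t ht
      rw [interior_Icc] at ht
      rw [((hGderiv t ht).sub (hFderiv t ht)).deriv]
      have := hDbound t ht
      linarith
  have hmain := hmono (Set.left_mem_Icc.mpr hrR) (Set.right_mem_Icc.mpr hrR) hrR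
  have hGr : G r = 0 := intervalIntegral.integral_same
  have hFR : F R - F r ≤ G R := by
    dsimp only at hmain
    rw [hGr] at hmain
    linarith
  have hsplit := intervalIntegral.integral_add_adjacent_intervals
    (hgint 0 r le_rfl hr.le hrR) (hgint r R hr.le hrR le_rfl)
  have h0r : 0 ≤ ∫ s in (0:ℝ)..r, g s :=
    intervalIntegral.integral_nonneg hr.le (fun x hx => hgnn x (hmem hx.1 (hx.2.trans hrR)))
  have hGR : G R ≤ c * ∫ s in (0:ℝ)..R, g s := by
    rw [hGdef]
    dsimp only
    rw [intervalIntegral.integral_const_mul]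
    apply mul_le_mul_of_nonneg_left _ hc
    rw [← hsplit]
    have hrRnn : 0 ≤ ∫ s in r..R, g s :=
      intervalIntegral.integral_nonneg hrR (fun x hx => hgnn x (hIccrR hx))
    linarith
  have final : F R - F r ≤ c * ∫ s in (0:ℝ)..R, g s := le_trans hFR hGR
  exact final
end

section
/- Let q > 1 and C₀ ≥ 0 be real numbers, let R₂ > 0, let u, v : (0,R₂] → (0,∞) be continuous with v nondecreasing, and let Λ : (0,R₂] → [0,∞) be nondecreasing. Assume that for all 0 < t ≤ s ≤ R₂: u(s)·v(t) − u(t)·v(s) ≤ C₀·Λ(s)·s^{1/q}·v(s)·(∫_t^s u(τ) dτ)^{1−1/q}. Then for all 0 < r₁ ≤ r₂ < R₁ ≤ R₂: (∫_{r₂}^{R₂} u / ∫_{r₂}^{R₂} v)^{1/q} − (∫_{r₁}^{R₁} u / ∫_{r₁}^{R₁} v)^{1/q} ≤ (C₀/q)·Λ(R₂)·( ∫_{R₁}^{R₂} v(t)·(t/∫_{r₂}^{t} v)^{(q+1)/q} dt + v(R₁)·∫_{r₁}^{r₂} (R₁/∫_{t}^{R₁} v)^{(q+1)/q} dt ). 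-/
open Set MeasureTheory intervalIntegral Real

section Stmt14Helpers
open Set MeasureTheory intervalIntegral Real

lemma aux_calc (q C A B x D : ℝ) (hq : 1 < q) (hC : 0 ≤ C) (hA : 0 < A) (hB : 0 < B)
    (hx : 0 < x) (hD : D ≤ C * x ^ ((q + 1) / q) * A ^ (1 - 1 / q)) :
    D / B ^ 2 * (1 / q) * (A / B) ^ (1 / q - 1)
      ≤ C / q * (x / B) ^ ((q + 1) / q) := by
  have hq0 : 0 < q := lt_trans one_pos hq
  have hP : 0 < (A / B) ^ (1 / q - 1) := Real.rpow_pos_of_pos (div_pos hA hB) _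
  have h1 : (A / B) ^ (1 / q - 1) = A ^ (1 / q - 1) * B ^ (1 - 1 / q) := by
    rw [Real.div_rpow hA.le hB.le, div_eq_mul_inv, ← Real.rpow_neg hB.le, neg_sub]
  have h2 : A ^ (1 - 1 / q) * A ^ (1 / q - 1) = 1 := by
    rw [← Real.rpow_add hA]; norm_num
  have h3 : B ^ (1 - 1 / q) / B ^ 2 = (B ^ ((q + 1) / q))⁻¹ := by
    rw [← Real.rpow_natCast B 2, ← Real.rpow_sub hB,
      show (1 - 1 / q - (2 : ℕ) : ℝ) = -((q + 1) / q) by push_cast; field_simp; ring,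
      Real.rpow_neg hB.le]
  have h4 : (x / B) ^ ((q + 1) / q) = x ^ ((q + 1) / q) * (B ^ ((q + 1) / q))⁻¹ := by
    rw [Real.div_rpow hx.le hB.le, div_eq_mul_inv]
  have step1 : D / B ^ 2 * (1 / q) * (A / B) ^ (1 / q - 1)
      ≤ (C * x ^ ((q + 1) / q) * A ^ (1 - 1 / q)) / B ^ 2 * (1 / q) * (A / B) ^ (1 / q - 1) := by
    gcongr
  refine step1.trans (le_of_eq ?_)
  rw [h1, h4]
  calc C * x ^ ((q + 1) / q) * A ^ (1 - 1 / q) / B ^ 2 * (1 / q)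
        * (A ^ (1 / q - 1) * B ^ (1 - 1 / q))
      = C / q * x ^ ((q + 1) / q) * (A ^ (1 - 1 / q) * A ^ (1 / q - 1))
        * (B ^ (1 - 1 / q) / B ^ 2) := by ring
    _ = C / q * (x ^ ((q + 1) / q) * (B ^ ((q + 1) / q))⁻¹) := by rw [h2, h3]; ring

lemma core_lemma (q : ℝ) (hq : 1 < q) (A B A' B' c w : ℝ → ℝ) (a b : ℝ) (hab : a ≤ b)
    (hAc : ContinuousOn A (Icc a b)) (hBc : ContinuousOn B (Icc a b))
    (hApos : ∀ x ∈ Icc a b, 0 < A x) (hBpos : ∀ x ∈ Icc a b, 0 < B x)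
    (hd : ∀ x ∈ Ioo a b, HasDerivAt A (A' x) x ∧ HasDerivAt B (B' x) x)
    (hc : ∀ x ∈ Ioo a b, 0 ≤ c x) (hw : ∀ x ∈ Ioo a b, 0 < w x)
    (hD : ∀ x ∈ Ioo a b,
      A' x * B x - A x * B' x ≤ c x * w x ^ ((q + 1) / q) * A x ^ (1 - 1 / q))
    (hint : IntegrableOn (fun x => c x / q * (w x / B x) ^ ((q + 1) / q)) (Icc a b)) :
    (A b / B b) ^ (1 / q) - (A a / B a) ^ (1 / q)
      ≤ ∫ x in a..b, c x / q * (w x / B x) ^ ((q + 1) / q) := by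
  have hg : ∀ x ∈ Ioo a b,
      HasDerivAt (fun y => (A y / B y) ^ (1 / q))
        ((A' x * B x - A x * B' x) / B x ^ 2 * (1 / q) * (A x / B x) ^ (1 / q - 1)) x := by
    intro x hx
    have hxm : x ∈ Icc a b := Ioo_subset_Icc_self hx
    have hA := hApos x hxm
    have hB := hBpos x hxm
    have hdiv : HasDerivAt (fun y => A y / B y)
        ((A' x * B x - A x * B' x) / B x ^ 2) x :=
      (hd x hx).1.div (hd x hx).2 hB.ne'
    have := hdiv.rpow_const (p := 1 / q) (Or.inl (div_pos hA hB).ne')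
    exact this
  refine intervalIntegral.sub_le_integral_of_hasDeriv_right_of_le hab ?_
    (fun x hx => (hg x hx).hasDerivWithinAt) hint ?_
  · exact (hAc.div hBc fun x hx => (hBpos x hx).ne').rpow_const
      (fun x hx => Or.inl (div_pos (hApos x hx) (hBpos x hx)).ne')
  · intro x hx
    have hxm : x ∈ Icc a b := Ioo_subset_Icc_self hx
    exact aux_calc q (c x) (A x) (B x) (w x) _ hq (hc x hx) (hApos x hxm) (hBpos x hxm)
      (hw x hx) (hD x hx)

end Stmt14Helpers


/-- Analytic core of Theorem 1.4 (relative volume comparison for annuli). -/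
theorem stmt_14 (q C₀ R₂ : ℝ) (hq : 1 < q) (hC₀ : 0 ≤ C₀) (hR₂ : 0 < R₂)
    (u v Λ : ℝ → ℝ)
    (hu : ContinuousOn u (Set.Ioc 0 R₂))
    (hupos : ∀ t ∈ Set.Ioc 0 R₂, 0 < u t)
    (hv : ContinuousOn v (Set.Ioc 0 R₂))
    (hvpos : ∀ t ∈ Set.Ioc 0 R₂, 0 < v t)
    (hvmono : MonotoneOn v (Set.Ioc 0 R₂))
    (hΛnn : ∀ t ∈ Set.Ioc 0 R₂, 0 ≤ Λ t)
    (hΛmono : MonotoneOn Λ (Set.Ioc 0 R₂))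
    (hratio : ∀ t s : ℝ, 0 < t → t ≤ s → s ≤ R₂ →
      u s * v t - u t * v s
        ≤ C₀ * Λ s * s ^ (1 / q) * v s * (∫ τ in t..s, u τ) ^ (1 - 1 / q)) :
    ∀ r₁ r₂ R₁ : ℝ, 0 < r₁ → r₁ ≤ r₂ → r₂ < R₁ → R₁ ≤ R₂ →
      ((∫ τ in r₂..R₂, u τ) / ∫ τ in r₂..R₂, v τ) ^ (1 / q)
          - ((∫ τ in r₁..R₁, u τ) / ∫ τ in r₁..R₁, v τ) ^ (1 / q)
        ≤ C₀ / q * Λ R₂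
          * ((∫ t in R₁..R₂, v t * (t / ∫ τ in r₂..t, v τ) ^ ((q + 1) / q))
            + v R₁ * ∫ t in r₁..r₂, (R₁ / ∫ τ in t..R₁, v τ) ^ ((q + 1) / q)) := by
  intro r₁ r₂ R₁ hr₁ hr12 hrR hR12
  have hq0 : 0 < q := lt_trans one_pos hq
  have hr₂ : 0 < r₂ := lt_of_lt_of_le hr₁ hr12
  have hR₁ : 0 < R₁ := lt_trans hr₂ hrR
  have hΛR₂ : 0 ≤ Λ R₂ := hΛnn R₂ ⟨hR₂, le_refl _⟩
  have he : (0:ℝ) ≤ (q + 1) / q := by positivity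
  have hsub : ∀ {s t : ℝ}, 0 < s → t ≤ R₂ → Icc s t ⊆ Ioc 0 R₂ :=
    fun hs ht y hy => ⟨lt_of_lt_of_le hs hy.1, le_trans hy.2 ht⟩
  have huI : ∀ {s t : ℝ}, 0 < s → s ≤ t → t ≤ R₂ → IntervalIntegrable u volume s t :=
    fun hs hst htR => ContinuousOn.intervalIntegrable
      (by rw [uIcc_of_le hst]; exact hu.mono (hsub hs htR))
  have hvI : ∀ {s t : ℝ}, 0 < s → s ≤ t → t ≤ R₂ → IntervalIntegrable v volume s t :=
    fun hs hst htR => ContinuousOn.intervalIntegrable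
      (by rw [uIcc_of_le hst]; exact hv.mono (hsub hs htR))
  have huNN : ∀ {s t : ℝ}, 0 < s → s ≤ t → t ≤ R₂ → 0 ≤ ∫ τ in s..t, u τ :=
    fun hs hst htR => intervalIntegral.integral_nonneg hst
      (fun y hy => (hupos y (hsub hs htR hy)).le)
  have huPos : ∀ {s t : ℝ}, 0 < s → s < t → t ≤ R₂ → 0 < ∫ τ in s..t, u τ :=
    fun hs hst htR => intervalIntegral_pos_of_pos_on (huI hs hst.le htR)
      (fun y hy => hupos y ⟨lt_trans hs hy.1, le_trans hy.2.le htR⟩) hst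
  have hvPos : ∀ {s t : ℝ}, 0 < s → s < t → t ≤ R₂ → 0 < ∫ τ in s..t, v τ :=
    fun hs hst htR => intervalIntegral_pos_of_pos_on (hvI hs hst.le htR)
      (fun y hy => hvpos y ⟨lt_trans hs hy.1, le_trans hy.2.le htR⟩) hst
  -- monotonicity of the inner u-integral in the left endpoint
  have huMonoL : ∀ {r t x : ℝ}, 0 < r → r ≤ t → t ≤ x → x ≤ R₂ →
      (∫ τ in t..x, u τ) ≤ ∫ τ in r..x, u τ := by
    intro r t x hr hrt htx hxR
    have h1 : (∫ τ in r..t, u τ) + ∫ τ in t..x, u τ = ∫ τ in r..x, u τ :=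
      intervalIntegral.integral_add_adjacent_intervals (huI hr hrt (le_trans htx hxR))
        (huI (lt_of_lt_of_le hr hrt) htx hxR)
    have h2 : 0 ≤ ∫ τ in r..t, u τ := huNN hr hrt (le_trans htx hxR)
    linarith
  have huMonoR : ∀ {x s t : ℝ}, 0 < x → x ≤ s → s ≤ t → t ≤ R₂ →
      (∫ τ in x..s, u τ) ≤ ∫ τ in x..t, u τ := by
    intro x s t hx hxs hst htR
    have h1 : (∫ τ in x..s, u τ) + ∫ τ in s..t, u τ = ∫ τ in x..t, u τ :=
      intervalIntegral.integral_add_adjacent_intervals (huI hx hxs (le_trans hst htR))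
        (huI (lt_of_lt_of_le hx hxs) hst htR)
    have h2 : 0 ≤ ∫ τ in s..t, u τ := huNN (lt_of_lt_of_le hx hxs) hst htR
    linarith
  have hone : (0:ℝ) ≤ 1 - 1 / q := by
    have : 1 / q ≤ 1 := by rw [div_le_one hq0]; exact hq.le
    linarith
  -- Part A
  have hBcA : ContinuousOn (fun x => ∫ τ in r₂..x, v τ) (Icc R₁ R₂) := by
    have hIv : IntegrableOn v (uIcc r₂ R₂) := by
      rw [uIcc_of_le (le_trans hrR.le hR12)]
      exact (hv.mono (hsub hr₂ le_rfl)).integrableOn_Icc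
    exact (intervalIntegral.continuousOn_primitive_interval hIv).mono
      (by rw [uIcc_of_le (le_trans hrR.le hR12)]; exact Icc_subset_Icc hrR.le le_rfl)
  have hAcA : ContinuousOn (fun x => ∫ τ in r₂..x, u τ) (Icc R₁ R₂) := by
    have hIu : IntegrableOn u (uIcc r₂ R₂) := by
      rw [uIcc_of_le (le_trans hrR.le hR12)]
      exact (hu.mono (hsub hr₂ le_rfl)).integrableOn_Icc
    exact (intervalIntegral.continuousOn_primitive_interval hIu).mono
      (by rw [uIcc_of_le (le_trans hrR.le hR12)]; exact Icc_subset_Icc hrR.le le_rfl)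
  have hAposA : ∀ x ∈ Icc R₁ R₂, 0 < ∫ τ in r₂..x, u τ :=
    fun x hx => huPos hr₂ (lt_of_lt_of_le hrR hx.1) hx.2
  have hBposA : ∀ x ∈ Icc R₁ R₂, 0 < ∫ τ in r₂..x, v τ :=
    fun x hx => hvPos hr₂ (lt_of_lt_of_le hrR hx.1) hx.2
  have hcu : ContinuousOn u (Ioo 0 R₂) := hu.mono Ioo_subset_Ioc_self
  have hcv : ContinuousOn v (Ioo 0 R₂) := hv.mono Ioo_subset_Ioc_self
  have hdA : ∀ x ∈ Ioo R₁ R₂, HasDerivAt (fun y => ∫ τ in r₂..y, u τ) (u x) x ∧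
      HasDerivAt (fun y => ∫ τ in r₂..y, v τ) (v x) x := by
    intro x hx
    have hx0 : 0 < x := lt_trans hR₁ hx.1
    have hxm : x ∈ Ioo (0:ℝ) R₂ := ⟨hx0, hx.2⟩
    constructor
    · exact intervalIntegral.integral_hasDerivAt_right
        (huI hr₂ (lt_trans hrR hx.1).le hx.2.le)
        (hcu.stronglyMeasurableAtFilter isOpen_Ioo x hxm)
        (hcu.continuousAt (isOpen_Ioo.mem_nhds hxm))
    · exact intervalIntegral.integral_hasDerivAt_right
        (hvI hr₂ (lt_trans hrR hx.1).le hx.2.le)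
        (hcv.stronglyMeasurableAtFilter isOpen_Ioo x hxm)
        (hcv.continuousAt (isOpen_Ioo.mem_nhds hxm))
  have hDA : ∀ x ∈ Ioo R₁ R₂,
      u x * (∫ τ in r₂..x, v τ) - (∫ τ in r₂..x, u τ) * v x
        ≤ (C₀ * Λ R₂ * v x) * x ^ ((q + 1) / q) * (∫ τ in r₂..x, u τ) ^ (1 - 1 / q) := by
    intro x hx
    have hx0 : 0 < x := lt_trans hR₁ hx.1
    have hxR : x ≤ R₂ := hx.2.le
    have hr₂x : r₂ < x := lt_trans hrR hx.1
    have hAx : 0 < ∫ τ in r₂..x, u τ := huPos hr₂ hr₂x hxR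
    have hvx : 0 < v x := hvpos x ⟨hx0, hxR⟩
    set K := C₀ * Λ R₂ * x ^ (1 / q) * v x * (∫ τ in r₂..x, u τ) ^ (1 - 1 / q) with hK
    have hKnn : 0 ≤ K :=
      mul_nonneg (mul_nonneg (mul_nonneg (mul_nonneg hC₀ hΛR₂)
        (Real.rpow_nonneg hx0.le _)) hvx.le) (Real.rpow_nonneg hAx.le _)
    have hpt : ∀ t ∈ Icc r₂ x, u x * v t - u t * v x ≤ K := by
      intro t ht
      have h0t : 0 < t := lt_of_lt_of_le hr₂ ht.1
      refine (hratio t x h0t ht.2 hxR).trans ?_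
      rw [hK]
      have h1 : Λ x ≤ Λ R₂ := hΛmono ⟨hx0, hxR⟩ ⟨hR₂, le_refl R₂⟩ hxR
      have h2 : (∫ τ in t..x, u τ) ≤ ∫ τ in r₂..x, u τ := huMonoL hr₂ ht.1 ht.2 hxR
      have h2' : 0 ≤ ∫ τ in t..x, u τ := huNN h0t ht.2 hxR
      have hΛx : 0 ≤ Λ x := hΛnn x ⟨hx0, hxR⟩
      gcongr
    have heq : u x * (∫ τ in r₂..x, v τ) - (∫ τ in r₂..x, u τ) * v x
        = ∫ t in r₂..x, (u x * v t - u t * v x) := by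
      rw [intervalIntegral.integral_sub ((hvI hr₂ hr₂x.le hxR).const_mul (u x))
        ((huI hr₂ hr₂x.le hxR).mul_const (v x)),
        intervalIntegral.integral_const_mul, intervalIntegral.integral_mul_const]
    have hle : (∫ t in r₂..x, (u x * v t - u t * v x)) ≤ (x - r₂) * K := by
      have h := intervalIntegral.integral_mono_on hr₂x.le
        (((hvI hr₂ hr₂x.le hxR).const_mul (u x)).sub ((huI hr₂ hr₂x.le hxR).mul_const (v x)))
        intervalIntegrable_const hpt
      rwa [intervalIntegral.integral_const, smul_eq_mul] at h
    have hxK : (x - r₂) * K ≤ x * K :=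
      mul_le_mul_of_nonneg_right (by linarith) hKnn
    have hfinal : x * K = (C₀ * Λ R₂ * v x) * x ^ ((q + 1) / q)
        * (∫ τ in r₂..x, u τ) ^ (1 - 1 / q) := by
      rw [hK, show (q + 1) / q = 1 + 1 / q by field_simp, Real.rpow_add hx0, Real.rpow_one]
      ring
    linarith
  have hintA : IntegrableOn
      (fun x => (C₀ * Λ R₂ * v x) / q * (x / ∫ τ in r₂..x, v τ) ^ ((q + 1) / q))
      (Icc R₁ R₂) := by
    apply ContinuousOn.integrableOn_Icc
    apply ContinuousOn.mul
    · exact (continuousOn_const.mul (hv.mono (hsub hR₁ le_rfl))).div_const q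
    · exact (continuous_id.continuousOn.div hBcA
        (fun x hx => (hBposA x hx).ne')).rpow_const (fun x hx => Or.inr he)
  have partA := core_lemma q hq (fun x => ∫ τ in r₂..x, u τ) (fun x => ∫ τ in r₂..x, v τ)
    u v (fun x => C₀ * Λ R₂ * v x) (fun x => x) R₁ R₂ hR12 hAcA hBcA hAposA hBposA hdA
    (fun x hx => mul_nonneg (mul_nonneg hC₀ hΛR₂) (hvpos x ⟨lt_trans hR₁ hx.1, hx.2.le⟩).le)
    (fun x hx => lt_trans hR₁ hx.1) hDA hintA
  have partA' : ((∫ τ in r₂..R₂, u τ) / ∫ τ in r₂..R₂, v τ) ^ (1 / q)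
      - ((∫ τ in r₂..R₁, u τ) / ∫ τ in r₂..R₁, v τ) ^ (1 / q)
      ≤ C₀ / q * Λ R₂ * ∫ t in R₁..R₂, v t * (t / ∫ τ in r₂..t, v τ) ^ ((q + 1) / q) := by
    refine partA.trans (le_of_eq ?_)
    rw [← intervalIntegral.integral_const_mul]
    exact intervalIntegral.integral_congr (fun t ht => by ring)
  -- Part B
  have hr₁R₁ : r₁ < R₁ := lt_of_le_of_lt hr12 hrR
  have hBcB : ContinuousOn (fun x => ∫ τ in x..R₁, v τ) (Icc r₁ r₂) := by
    have hIv : IntegrableOn v (uIcc r₁ R₁) := by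
      rw [uIcc_of_le hr₁R₁.le]
      exact (hv.mono (hsub hr₁ hR12)).integrableOn_Icc
    exact (intervalIntegral.continuousOn_primitive_interval_left hIv).mono
      (by rw [uIcc_of_le hr₁R₁.le]; exact Icc_subset_Icc le_rfl hrR.le)
  have hAcB : ContinuousOn (fun x => ∫ τ in x..R₁, u τ) (Icc r₁ r₂) := by
    have hIu : IntegrableOn u (uIcc r₁ R₁) := by
      rw [uIcc_of_le hr₁R₁.le]
      exact (hu.mono (hsub hr₁ hR12)).integrableOn_Icc
    exact (intervalIntegral.continuousOn_primitive_interval_left hIu).mono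
      (by rw [uIcc_of_le hr₁R₁.le]; exact Icc_subset_Icc le_rfl hrR.le)
  have hAposB : ∀ x ∈ Icc r₁ r₂, 0 < ∫ τ in x..R₁, u τ :=
    fun x hx => huPos (lt_of_lt_of_le hr₁ hx.1) (lt_of_le_of_lt hx.2 hrR) hR12
  have hBposB : ∀ x ∈ Icc r₁ r₂, 0 < ∫ τ in x..R₁, v τ :=
    fun x hx => hvPos (lt_of_lt_of_le hr₁ hx.1) (lt_of_le_of_lt hx.2 hrR) hR12
  have hdB : ∀ x ∈ Ioo r₁ r₂, HasDerivAt (fun y => ∫ τ in y..R₁, u τ) (-u x) x ∧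
      HasDerivAt (fun y => ∫ τ in y..R₁, v τ) (-v x) x := by
    intro x hx
    have hx0 : 0 < x := lt_trans hr₁ hx.1
    have hxm : x ∈ Ioo (0:ℝ) R₂ := ⟨hx0, lt_of_lt_of_le (lt_trans hx.2 hrR) hR12⟩
    constructor
    · exact intervalIntegral.integral_hasDerivAt_left
        (huI hx0 (lt_trans hx.2 hrR).le hR12)
        (hcu.stronglyMeasurableAtFilter isOpen_Ioo x hxm)
        (hcu.continuousAt (isOpen_Ioo.mem_nhds hxm))
    · exact intervalIntegral.integral_hasDerivAt_left
        (hvI hx0 (lt_trans hx.2 hrR).le hR12)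
        (hcv.stronglyMeasurableAtFilter isOpen_Ioo x hxm)
        (hcv.continuousAt (isOpen_Ioo.mem_nhds hxm))
  have hvR₁ : 0 < v R₁ := hvpos R₁ ⟨hR₁, hR12⟩
  have hDB : ∀ x ∈ Ioo r₁ r₂,
      (-u x) * (∫ τ in x..R₁, v τ) - (∫ τ in x..R₁, u τ) * (-v x)
        ≤ (C₀ * Λ R₂ * v R₁) * R₁ ^ ((q + 1) / q) * (∫ τ in x..R₁, u τ) ^ (1 - 1 / q) := by
    intro x hx
    have hx0 : 0 < x := lt_trans hr₁ hx.1
    have hxR₁ : x < R₁ := lt_trans hx.2 hrR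
    have hAx : 0 < ∫ τ in x..R₁, u τ := huPos hx0 hxR₁ hR12
    set K := C₀ * Λ R₂ * R₁ ^ (1 / q) * v R₁ * (∫ τ in x..R₁, u τ) ^ (1 - 1 / q) with hK
    have hKnn : 0 ≤ K :=
      mul_nonneg (mul_nonneg (mul_nonneg (mul_nonneg hC₀ hΛR₂)
        (Real.rpow_nonneg hR₁.le _)) hvR₁.le) (Real.rpow_nonneg hAx.le _)
    have hpt : ∀ s ∈ Icc x R₁, u s * v x - u x * v s ≤ K := by
      intro s hs
      have h0s : 0 < s := lt_of_lt_of_le hx0 hs.1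
      have hsR₂ : s ≤ R₂ := le_trans hs.2 hR12
      refine (hratio x s hx0 hs.1 hsR₂).trans ?_
      rw [hK]
      have h1 : Λ s ≤ Λ R₂ := hΛmono ⟨h0s, hsR₂⟩ ⟨hR₂, le_refl R₂⟩ hsR₂
      have h2 : s ^ (1 / q) ≤ R₁ ^ (1 / q) :=
        Real.rpow_le_rpow h0s.le hs.2 (by positivity)
      have h3 : v s ≤ v R₁ := hvmono ⟨h0s, hsR₂⟩ ⟨hR₁, hR12⟩ hs.2
      have h4 : (∫ τ in x..s, u τ) ≤ ∫ τ in x..R₁, u τ := huMonoR hx0 hs.1 hs.2 hR12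
      have h4' : 0 ≤ ∫ τ in x..s, u τ := huNN hx0 hs.1 hsR₂
      have hΛs : 0 ≤ Λ s := hΛnn s ⟨h0s, hsR₂⟩
      have hvs : 0 ≤ v s := (hvpos s ⟨h0s, hsR₂⟩).le
      gcongr
    have heq : (∫ τ in x..R₁, u τ) * v x - u x * (∫ τ in x..R₁, v τ)
        = ∫ s in x..R₁, (u s * v x - u x * v s) := by
      rw [intervalIntegral.integral_sub ((huI hx0 hxR₁.le hR12).mul_const (v x))
        ((hvI hx0 hxR₁.le hR12).const_mul (u x)),
        intervalIntegral.integral_mul_const, intervalIntegral.integral_const_mul]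
    have hle : (∫ s in x..R₁, (u s * v x - u x * v s)) ≤ (R₁ - x) * K := by
      have h := intervalIntegral.integral_mono_on hxR₁.le
        (((huI hx0 hxR₁.le hR12).mul_const (v x)).sub ((hvI hx0 hxR₁.le hR12).const_mul (u x)))
        intervalIntegrable_const hpt
      rwa [intervalIntegral.integral_const, smul_eq_mul] at h
    have hxK : (R₁ - x) * K ≤ R₁ * K :=
      mul_le_mul_of_nonneg_right (by linarith) hKnn
    have hfinal : R₁ * K = (C₀ * Λ R₂ * v R₁) * R₁ ^ ((q + 1) / q)
        * (∫ τ in x..R₁, u τ) ^ (1 - 1 / q) := by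
      rw [hK, show (q + 1) / q = 1 + 1 / q by field_simp, Real.rpow_add hR₁, Real.rpow_one]
      ring
    have hgoal : (-u x) * (∫ τ in x..R₁, v τ) - (∫ τ in x..R₁, u τ) * (-v x)
        = (∫ τ in x..R₁, u τ) * v x - u x * (∫ τ in x..R₁, v τ) := by ring
    linarith [heq, hle, hxK, hfinal, hgoal]
  have hintB : IntegrableOn
      (fun x => (C₀ * Λ R₂ * v R₁) / q * (R₁ / ∫ τ in x..R₁, v τ) ^ ((q + 1) / q))
      (Icc r₁ r₂) := by
    apply ContinuousOn.integrableOn_Icc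
    apply ContinuousOn.mul continuousOn_const
    exact (continuousOn_const.div hBcB
      (fun x hx => (hBposB x hx).ne')).rpow_const (fun x hx => Or.inr he)
  have partB := core_lemma q hq (fun x => ∫ τ in x..R₁, u τ) (fun x => ∫ τ in x..R₁, v τ)
    (fun x => -u x) (fun x => -v x) (fun _ => C₀ * Λ R₂ * v R₁) (fun _ => R₁) r₁ r₂ hr12
    hAcB hBcB hAposB hBposB hdB
    (fun x hx => mul_nonneg (mul_nonneg hC₀ hΛR₂) hvR₁.le)
    (fun x hx => hR₁) hDB hintB
  have partB' : ((∫ τ in r₂..R₁, u τ) / ∫ τ in r₂..R₁, v τ) ^ (1 / q)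
      - ((∫ τ in r₁..R₁, u τ) / ∫ τ in r₁..R₁, v τ) ^ (1 / q)
      ≤ C₀ / q * Λ R₂
        * (v R₁ * ∫ t in r₁..r₂, (R₁ / ∫ τ in t..R₁, v τ) ^ ((q + 1) / q)) := by
    refine partB.trans (le_of_eq ?_)
    rw [show C₀ / q * Λ R₂ * (v R₁ * ∫ t in r₁..r₂, (R₁ / ∫ τ in t..R₁, v τ) ^ ((q + 1) / q))
      = (C₀ * Λ R₂ * v R₁ / q) * ∫ t in r₁..r₂, (R₁ / ∫ τ in t..R₁, v τ) ^ ((q + 1) / q)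
      by ring, ← intervalIntegral.integral_const_mul]
  have hsplit : C₀ / q * Λ R₂
      * ((∫ t in R₁..R₂, v t * (t / ∫ τ in r₂..t, v τ) ^ ((q + 1) / q))
        + v R₁ * ∫ t in r₁..r₂, (R₁ / ∫ τ in t..R₁, v τ) ^ ((q + 1) / q))
      = C₀ / q * Λ R₂ * (∫ t in R₁..R₂, v t * (t / ∫ τ in r₂..t, v τ) ^ ((q + 1) / q))
        + C₀ / q * Λ R₂
          * (v R₁ * ∫ t in r₁..r₂, (R₁ / ∫ τ in t..R₁, v τ) ^ ((q + 1) / q)) := by ring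
  linarith [partA', partB']
end
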